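/- Let H be a real Hilbert space, K a nonempty convex subset of H, g : H → H a map, p > 1, μ > 0, and F : H → ℝ Fréchet differentiable. Assume F is sharply higher order strongly general pseudoconvex with constant μ: for all u, v ∈ H with g u, g v ∈ K satisfying ⟨∇F(g u), g v − g u⟩ ≥ 0 and all t ∈ [0,1], F(g v) ≥ F(g v + t·(g u − g v)) + μ·(t^p·(1−t) + t·(1−t)^p)·‖g v − g u‖^p. Then for all u, v ∈ H with g u, g v ∈ K satisfying ⟨∇F(g u), g v − g u⟩ ≥ 0, one has ⟨∇F(g v), g v − g u⟩ ≥ μ·‖g v − g u‖^p. -/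

import Mathlib

open scoped RealInnerProductSpace

theorem stmt_12 {H : Type*} [NormedAddCommGroup H] [InnerProductSpace ℝ H] [CompleteSpace H]
    (K : Set H) (hK : K.Nonempty) (hKconv : Convex ℝ K)
    (g : H → H) (p μ : ℝ) (hp : 1 < p) (hμ : 0 < μ)
    (F : H → ℝ) (F' : H → H) (hF : ∀ x : H, HasGradientAt F (F' x) x)
    (hsharp : ∀ u v : H, g u ∈ K → g v ∈ K → 0 ≤ ⟪F' (g u), g v - g u⟫ →
      ∀ t ∈ Set.Icc (0 : ℝ) 1,
        F (g v + t • (g u - g v)) + μ * (t ^ p * (1 - t) + t * (1 - t) ^ p) * ‖g v - g u‖ ^ p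
          ≤ F (g v)) :
    ∀ u v : H, g u ∈ K → g v ∈ K → 0 ≤ ⟪F' (g u), g v - g u⟫ →
      μ * ‖g v - g u‖ ^ p ≤ ⟪F' (g v), g v - g u⟫ := by
  intro u v hu hv hinner
  set d : H := g u - g v with hd
  set A : ℝ := ‖g v - g u‖ ^ p with hA
  -- derivative of φ(t) = F (g v + t • d) at 0
  have hline : HasDerivAt (fun t : ℝ => g v + t • d) d 0 := by
    have h1 : HasDerivAt (fun t : ℝ => t • d) ((1:ℝ) • d) 0 :=
      (hasDerivAt_id (0:ℝ)).smul_const d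
    simpa using h1.const_add (g v)
  have hφ : HasDerivAt (fun t : ℝ => F (g v + t • d)) ⟪F' (g v), d⟫ 0 := by
    have hF' : HasFDerivAt F ((InnerProductSpace.toDual ℝ H) (F' (g v))) (g v + (0:ℝ) • d) := by
      simpa using (hF (g v)).hasFDerivAt
    have := hF'.comp_hasDerivAt 0 hline
    simpa [InnerProductSpace.toDual_apply_apply, Function.comp_def] using this
  have hslope : Filter.Tendsto (slope (fun t : ℝ => F (g v + t • d)) 0)
      (nhdsWithin 0 (Set.Ioi 0)) (nhds ⟪F' (g v), d⟫) :=
    (hasDerivAt_iff_tendsto_slope.mp hφ).mono_left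
      (nhdsWithin_mono 0 (by intro x hx; exact ne_of_gt hx))
  -- limit of RHS coefficient
  have hc : Filter.Tendsto (fun t : ℝ => -(μ * (t ^ (p-1) * (1 - t) + (1 - t) ^ p) * A))
      (nhdsWithin 0 (Set.Ioi 0)) (nhds (-(μ * A))) := by
    have h1 : ContinuousAt (fun t : ℝ => t ^ (p-1)) 0 :=
      Real.continuousAt_rpow_const 0 (p-1) (Or.inr (by linarith))
    have h2 : ContinuousAt (fun t : ℝ => (1 - t) ^ p) 0 := by
      have : ContinuousAt (fun x : ℝ => x ^ p) (1 - 0) :=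
        Real.continuousAt_rpow_const _ p (Or.inl (by norm_num))
      exact this.comp (continuousAt_const.sub continuousAt_id)
    have hcont : ContinuousAt
        (fun t : ℝ => -(μ * (t ^ (p-1) * (1 - t) + (1 - t) ^ p) * A)) 0 := by
      exact ((continuousAt_const.mul
        ((h1.mul (continuousAt_const.sub continuousAt_id)).add h2)).mul
        continuousAt_const).neg
    have h3 : Filter.Tendsto (fun t : ℝ => -(μ * (t ^ (p-1) * (1 - t) + (1 - t) ^ p) * A))
        (nhdsWithin 0 (Set.Ioi 0))
        (nhds (-(μ * ((0:ℝ) ^ (p-1) * (1 - 0) + (1 - (0:ℝ)) ^ p) * A))) :=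
      hcont.tendsto.mono_left nhdsWithin_le_nhds
    have hz : (0:ℝ) ^ (p-1) = 0 := Real.zero_rpow (by linarith)
    simpa [hz] using h3
  -- pointwise inequality eventually
  have hev : ∀ᶠ t in nhdsWithin (0:ℝ) (Set.Ioi 0),
      slope (fun t : ℝ => F (g v + t • d)) 0 t
        ≤ -(μ * (t ^ (p-1) * (1 - t) + (1 - t) ^ p) * A) := by
    filter_upwards [Ioc_mem_nhdsGT_of_mem (Set.left_mem_Ico.mpr one_pos)] with t ht
    obtain ⟨ht0, ht1⟩ := ht
    have hkey := hsharp u v hu hv hinner t ⟨le_of_lt ht0, ht1⟩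
    have htp : t ^ p = t * t ^ (p - 1) := by
      rw [show p = 1 + (p - 1) by ring, Real.rpow_add ht0, Real.rpow_one]
      ring_nf
    have hslope_eq : slope (fun t : ℝ => F (g v + t • d)) 0 t
        = (F (g v + t • d) - F (g v)) / t := by
      simp [slope_def_field]
    rw [hslope_eq, div_le_iff₀ ht0]
    have : μ * (t ^ p * (1 - t) + t * (1 - t) ^ p) * A
        = (μ * (t ^ (p-1) * (1 - t) + (1 - t) ^ p) * A) * t := by
      rw [htp]; ring
    nlinarith [hkey]
  have hfinal : ⟪F' (g v), d⟫ ≤ -(μ * A) :=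
    le_of_tendsto_of_tendsto hslope hc hev
  have : ⟪F' (g v), g v - g u⟫ = -⟪F' (g v), d⟫ := by
    rw [hd, ← inner_neg_right]; congr 1; abel
  rw [this]
  linarith
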